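/- Fix positive integers d, a, α, λ with a < (d+3)/2. The number of partitions with largest part exactly α, exactly λ parts, and all parts congruent to ±a modulo d+3 is nonzero if and only if α ≥ a and α ≡ ±a (mod d+3); when α ≡ a (mod d+3) it equals C(2(α-a)/(d+3) + λ - 1, λ - 1), and when α ≡ -a (mod d+3) it equals C(2(α+a)/(d+3) + λ - 2, λ - 1). -/

import Mathlib

/-- A partition: a nonempty, nonincreasing list of positive integers. -/
def IsPartition (l : List ℕ) : Prop :=
  l ≠ [] ∧ l.Pairwise (· ≥ ·) ∧ ∀ x ∈ l, 0 < x

/-- Perimeter: (largest part) + (number of parts) - 1. -/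
def perimeter (l : List ℕ) : ℕ := l.headI + l.length - 1

/-- d-distinct: consecutive parts differ by at least d. -/
def DDistinct (d : ℕ) (l : List ℕ) : Prop := l.Chain' (fun x y => y + d ≤ x)

namespace Stmt10Aux

/-- the k-th smallest positive integer congruent to ±a mod m -/
def val (m a k : ℕ) : ℕ := (k / 2) * m + (if k % 2 = 0 then a else m - a)

lemma val_even (m a j : ℕ) : val m a (2 * j) = j * m + a := by
  have h1 : (2 * j) / 2 = j := by omega
  have h2 : (2 * j) % 2 = 0 := by omega
  unfold val; rw [h1, h2]; simp

lemma val_odd (m a j : ℕ) : val m a (2 * j + 1) = j * m + (m - a) := by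
  have h1 : (2 * j + 1) / 2 = j := by omega
  have h2 : (2 * j + 1) % 2 = 1 := by omega
  unfold val; rw [h1, h2]; simp

variable {m a : ℕ}

lemma val_strictMono (ha : 0 < a) (hm : 2 * a < m) : StrictMono (val m a) := by
  apply strictMono_nat_of_lt_succ
  intro k
  unfold val
  rcases Nat.even_or_odd k with he | ho
  · rw [Nat.even_iff] at he
    have h1 : (k + 1) / 2 = k / 2 := by omega
    rw [if_pos he, if_neg (by omega), h1]
    have : 0 ≤ k / 2 * m := Nat.zero_le _
    omega
  · rw [Nat.odd_iff] at ho
    have h1 : (k + 1) / 2 = k / 2 + 1 := by omega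
    rw [if_neg (by omega), if_pos (by omega), h1, add_mul, one_mul]
    omega

lemma val_pos (ha : 0 < a) (hm : 2 * a < m) (k : ℕ) : 0 < val m a k := by
  unfold val; split_ifs
  · exact Nat.lt_of_lt_of_le ha (Nat.le_add_left _ _)
  · exact Nat.lt_of_lt_of_le (by omega) (Nat.le_add_left _ _)

lemma val_mod (ha : 0 < a) (hm : 2 * a < m) (k : ℕ) :
    val m a k % m = a % m ∨ (val m a k + a) % m = 0 := by
  unfold val; split_ifs
  · left; rw [Nat.add_comm, Nat.add_mul_mod_self_right]
  · right
    have h1 : k / 2 * m + (m - a) + a = (k / 2 + 1) * m := by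
      rw [add_mul, one_mul]; omega
    rw [h1, Nat.mul_mod_left]

lemma val_surj (ha : 0 < a) (hm : 2 * a < m) (x : ℕ) (hx : 0 < x)
    (h : x % m = a % m ∨ (x + a) % m = 0) : ∃ k, val m a k = x := by
  have ham : a % m = a := Nat.mod_eq_of_lt (by omega)
  rcases h with h | h
  · rw [ham] at h
    have hd : m * (x / m) + x % m = x := Nat.div_add_mod x m
    refine ⟨2 * (x / m), ?_⟩
    rw [val_even, Nat.mul_comm]; omega
  · have hd : m * ((x + a) / m) + (x + a) % m = x + a := Nat.div_add_mod (x + a) m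
    set q := (x + a) / m with hq
    have hq1 : 1 ≤ q := by
      rcases Nat.eq_zero_or_pos q with h0 | h0
      · rw [h0] at hd; omega
      · exact h0
    obtain ⟨t, ht⟩ : ∃ t, q = t + 1 := ⟨q - 1, by omega⟩
    rw [ht, Nat.mul_add, Nat.mul_one] at hd
    refine ⟨2 * t + 1, ?_⟩
    rw [val_odd, Nat.mul_comm]; omega

/-- The central counting lemma. -/
lemma card_eq (ha : 0 < a) (hm : 2 * a < m) (lam : ℕ) (hlam : 0 < lam) (N : ℕ) :
    Nat.card {l : List ℕ // IsPartition l ∧ l.headI = val m a N ∧ l.length = lam ∧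
      (∀ x ∈ l, x % m = a % m ∨ (x + a) % m = 0)} = (N + lam - 1).choose (lam - 1) := by
  set A := val m a N with hA
  set S := {x : ℕ // (x % m = a % m ∨ (x + a) % m = 0) ∧ 0 < x ∧ x ≤ A} with hS
  -- Fin (N+1) ≃ S
  have e1 : Fin (N + 1) ≃ S := by
    refine Equiv.ofBijective
      (fun i => ⟨val m a i, val_mod ha hm i, val_pos ha hm i,
        (val_strictMono ha hm).monotone (by omega : (i : ℕ) ≤ N)⟩) ⟨?_, ?_⟩
    · intro i j hij
      have := (val_strictMono ha hm).injective (congrArg Subtype.val hij)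
      exact Fin.ext this
    · rintro ⟨x, hx1, hx2, hx3⟩
      obtain ⟨k, hk⟩ := val_surj ha hm x hx2 hx1
      have hkN : k ≤ N := (val_strictMono ha hm).le_iff_le.mp (by rw [hk]; exact hx3)
      exact ⟨⟨k, by omega⟩, Subtype.ext hk⟩
  -- the map from Sym S (lam-1) to partitions
  let g0 : Sym S (lam - 1) → List ℕ :=
    fun σ => A :: Multiset.sort ((σ : Multiset S).map Subtype.val) (· ≥ ·)
  have hg0mem : ∀ σ b, b ∈ Multiset.sort ((σ : Multiset S).map Subtype.val) (· ≥ ·) →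
      (b % m = a % m ∨ (b + a) % m = 0) ∧ 0 < b ∧ b ≤ A := by
    intro σ b hb
    rw [Multiset.mem_sort] at hb
    obtain ⟨⟨x, hx⟩, _, rfl⟩ := Multiset.mem_map.mp hb
    exact hx
  have hg0prop : ∀ σ : Sym S (lam - 1), IsPartition (g0 σ) ∧ (g0 σ).headI = A ∧
      (g0 σ).length = lam ∧ (∀ x ∈ g0 σ, x % m = a % m ∨ (x + a) % m = 0) := by
    intro σ
    refine ⟨⟨by simp [g0], ?_, ?_⟩, rfl, ?_, ?_⟩
    · rw [List.pairwise_cons]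
      exact ⟨fun b hb => (hg0mem σ b hb).2.2, Multiset.pairwise_sort _ _⟩
    · intro x hx
      rcases List.mem_cons.mp hx with rfl | hx
      · exact val_pos ha hm N
      · exact (hg0mem σ x hx).2.1
    · simp only [g0, List.length_cons, Multiset.length_sort, Multiset.card_map, Sym.card_coe]
      omega
    · intro x hx
      rcases List.mem_cons.mp hx with rfl | hx
      · exact val_mod ha hm N
      · exact (hg0mem σ x hx).1
  let g : Sym S (lam - 1) → {l : List ℕ // IsPartition l ∧ l.headI = val m a N ∧
      l.length = lam ∧ (∀ x ∈ l, x % m = a % m ∨ (x + a) % m = 0)} :=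
    fun σ => ⟨g0 σ, hg0prop σ⟩
  have hgbij : Function.Bijective g := by
    constructor
    · intro σ τ hστ
      have h1 : g0 σ = g0 τ := congrArg Subtype.val hστ
      have h2 : Multiset.sort ((σ : Multiset S).map Subtype.val) (· ≥ ·) =
          Multiset.sort ((τ : Multiset S).map Subtype.val) (· ≥ ·) :=
        List.tail_eq_of_cons_eq h1
      have h3 : (σ : Multiset S).map Subtype.val = (τ : Multiset S).map Subtype.val := by
        rw [← Multiset.sort_eq ((σ : Multiset S).map Subtype.val) (· ≥ ·),
          ← Multiset.sort_eq ((τ : Multiset S).map Subtype.val) (· ≥ ·), h2]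
      exact Sym.coe_injective (Multiset.map_injective Subtype.val_injective h3)
    · rintro ⟨l, ⟨hne, hsort, hpos⟩, hhead, hlen, hmod⟩
      obtain ⟨y, t, rfl⟩ : ∃ y t, l = y :: t := by
        cases l with
        | nil => exact absurd rfl hne
        | cons y t => exact ⟨y, t, rfl⟩
      have hy : y = A := hhead
      subst hy
      have hQ : ∀ x ∈ (↑t : Multiset ℕ),
          (x % m = a % m ∨ (x + a) % m = 0) ∧ 0 < x ∧ x ≤ A := by
        intro x hx
        rw [Multiset.mem_coe] at hx
        exact ⟨hmod x (List.mem_cons_of_mem _ hx), hpos x (List.mem_cons_of_mem _ hx),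
          List.rel_of_pairwise_cons hsort hx⟩
      have hcard : Multiset.card ((↑t : Multiset ℕ).attach.map
          (fun x => (⟨x.1, hQ x.1 x.2⟩ : S))) = lam - 1 := by
        rw [Multiset.card_map, Multiset.card_attach, Multiset.coe_card]
        simp only [List.length_cons] at hlen; omega
      refine ⟨⟨(↑t : Multiset ℕ).attach.map (fun x => (⟨x.1, hQ x.1 x.2⟩ : S)), hcard⟩, ?_⟩
      · apply Subtype.ext
        show g0 _ = A :: t
        have hmap : ((⟨(↑t : Multiset ℕ).attach.map (fun x => (⟨x.1, hQ x.1 x.2⟩ : S)), hcard⟩ :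
            Sym S (lam - 1)) : Multiset S).map Subtype.val = (↑t : Multiset ℕ) := by
          show (((↑t : Multiset ℕ).attach.map (fun x => (⟨x.1, hQ x.1 x.2⟩ : S))).map
            Subtype.val) = (↑t : Multiset ℕ)
          rw [Multiset.map_map]
          exact Multiset.attach_map_val _
        have hsortt : Multiset.sort (↑t : Multiset ℕ) (· ≥ ·) = t := by
          exact List.Perm.eq_of_pairwise'
            (Multiset.pairwise_sort _ _) hsort.of_cons
            (Multiset.coe_eq_coe.mp (Multiset.sort_eq (↑t : Multiset ℕ) (· ≥ ·)))
        exact (congrArg (fun s => A :: Multiset.sort s (· ≥ ·)) hmap).trans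
          (by rw [hsortt])
  calc Nat.card {l : List ℕ // IsPartition l ∧ l.headI = val m a N ∧ l.length = lam ∧
        (∀ x ∈ l, x % m = a % m ∨ (x + a) % m = 0)}
      = Nat.card (Sym S (lam - 1)) := (Nat.card_congr (Equiv.ofBijective g hgbij)).symm
    _ = Nat.card (Sym (Fin (N + 1)) (lam - 1)) :=
        (Nat.card_congr (Sym.equivCongr e1)).symm
    _ = (N + 1 + (lam - 1) - 1).choose (lam - 1) := by
        rw [Nat.card_eq_fintype_card, Sym.card_sym_eq_choose, Fintype.card_fin]
    _ = (N + lam - 1).choose (lam - 1) := by congr 1; omega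

end Stmt10Aux

theorem stmt10 (d a α lam : ℕ) (hd : 0 < d) (ha : 0 < a) (hα : 0 < α) (hlam : 0 < lam)
    (h : 2 * a < d + 3) :
    (0 < Nat.card {l : List ℕ // IsPartition l ∧ l.headI = α ∧ l.length = lam ∧
        (∀ x ∈ l, x % (d + 3) = a % (d + 3) ∨ (x + a) % (d + 3) = 0)} ↔
      a ≤ α ∧ (α % (d + 3) = a % (d + 3) ∨ (α + a) % (d + 3) = 0)) ∧
    (a ≤ α → α % (d + 3) = a % (d + 3) →
      Nat.card {l : List ℕ // IsPartition l ∧ l.headI = α ∧ l.length = lam ∧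
          (∀ x ∈ l, x % (d + 3) = a % (d + 3) ∨ (x + a) % (d + 3) = 0)}
        = Nat.choose (2 * ((α - a) / (d + 3)) + lam - 1) (lam - 1)) ∧
    (a ≤ α → (α + a) % (d + 3) = 0 →
      Nat.card {l : List ℕ // IsPartition l ∧ l.headI = α ∧ l.length = lam ∧
          (∀ x ∈ l, x % (d + 3) = a % (d + 3) ∨ (x + a) % (d + 3) = 0)}
        = Nat.choose (2 * ((α + a) / (d + 3)) + lam - 2) (lam - 1)) := by
  set m := d + 3 with hmdef
  have hm : 2 * a < m := h
  have ham : a % m = a := Nat.mod_eq_of_lt (by omega)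
  have part2 : α % m = a % m →
      Nat.card {l : List ℕ // IsPartition l ∧ l.headI = α ∧ l.length = lam ∧
          (∀ x ∈ l, x % m = a % m ∨ (x + a) % m = 0)}
        = Nat.choose (2 * ((α - a) / m) + lam - 1) (lam - 1) := by
    intro h2
    have hd2 : m * (α / m) + α % m = α := Nat.div_add_mod α m
    set q := α / m with hq
    have hα' : α = m * q + a := by omega
    have hval : Stmt10Aux.val m a (2 * q) = α := by
      rw [Stmt10Aux.val_even, Nat.mul_comm]; omega
    have hdiv : (α - a) / m = q := by
      have hsub : α - a = m * q := by omega
      rw [hsub, Nat.mul_div_cancel_left _ (by omega : 0 < m)]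
    rw [hdiv, ← hval]
    exact Stmt10Aux.card_eq ha hm lam hlam (2 * q)
  have part3 : (α + a) % m = 0 →
      Nat.card {l : List ℕ // IsPartition l ∧ l.headI = α ∧ l.length = lam ∧
          (∀ x ∈ l, x % m = a % m ∨ (x + a) % m = 0)}
        = Nat.choose (2 * ((α + a) / m) + lam - 2) (lam - 1) := by
    intro h3
    have hd3 : m * ((α + a) / m) + (α + a) % m = α + a := Nat.div_add_mod (α + a) m
    set j := (α + a) / m with hj
    have hj1 : 1 ≤ j := by
      rcases Nat.eq_zero_or_pos j with h0 | h0
      · rw [h0, Nat.mul_zero] at hd3; omega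
      · exact h0
    obtain ⟨t, ht⟩ : ∃ t, j = t + 1 := ⟨j - 1, by omega⟩
    have hd3' : m * t + m = α + a := by
      rw [ht, Nat.mul_add, Nat.mul_one] at hd3; omega
    have hval : Stmt10Aux.val m a (2 * t + 1) = α := by
      rw [Stmt10Aux.val_odd, Nat.mul_comm]; omega
    have hchoose : 2 * j + lam - 2 = 2 * t + 1 + lam - 1 := by omega
    rw [hchoose, ← hval]
    exact Stmt10Aux.card_eq ha hm lam hlam (2 * t + 1)
  refine ⟨⟨?_, ?_⟩, fun _ h2 => part2 h2, fun _ h3 => part3 h3⟩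
  · intro hpos
    obtain ⟨⟨⟨l, hl⟩⟩, -⟩ := Nat.card_pos_iff.mp hpos
    obtain ⟨⟨hne, hsort, hposl⟩, hhead, hlen, hmodl⟩ := hl
    obtain ⟨y, t, rfl⟩ : ∃ y t, l = y :: t := by
      cases l with
      | nil => exact absurd rfl hne
      | cons y t => exact ⟨y, t, rfl⟩
    have hy : y = α := hhead
    have hQ : α % m = a % m ∨ (α + a) % m = 0 :=
      hy ▸ hmodl y List.mem_cons_self
    obtain ⟨k, hk⟩ := Stmt10Aux.val_surj ha hm α hα hQ
    have hmono : Stmt10Aux.val m a 0 ≤ Stmt10Aux.val m a k :=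
      (Stmt10Aux.val_strictMono ha hm).monotone (Nat.zero_le k)
    have hv0 : Stmt10Aux.val m a 0 = a := by simp [Stmt10Aux.val]
    have hle : a ≤ α := by rw [← hv0, ← hk]; exact hmono
    exact ⟨hle, hQ⟩
  · rintro ⟨hle, hQ | hQ⟩
    · rw [part2 hQ]; exact Nat.choose_pos (by omega)
    · rw [part3 hQ]
      have hdvd : m ∣ (α + a) := Nat.dvd_of_mod_eq_zero hQ
      have hj1 : 1 ≤ (α + a) / m :=
        (Nat.one_le_div_iff (by omega)).mpr (Nat.le_of_dvd (by omega) hdvd)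
      set j := (α + a) / m
      exact Nat.choose_pos (by omega)
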